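/- Let U ⊆ V and i ∈ V. For every z ∈ [0,∞)^d with recursive max-linear values x on 𝒟, one has x_i = max( max_{k ∈ An_low^U(i)} (b_{ki}/b_{kk}) x_k , max_{j ∈ An_nmw^U(i)} b_{ji} z_j ) (maxima over the empty set are 0). -/

import Mathlib

open scoped NNReal ENNReal Classical

namespace MaxLinearDAG

variable {d : ℕ}

/-- `p` is a directed path (with at least one edge) from `j` to `i` in the edge relation `E`. -/
def PathFrom (E : Fin d → Fin d → Prop) (j i : Fin d) (p : List (Fin d)) : Prop :=
  2 ≤ p.length ∧ p.head? = some j ∧ p.getLast? = some i ∧ List.Chain' E p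

/-- The directed graph given by `E` is acyclic: no directed path from a node to itself. -/
def Acyclic (E : Fin d → Fin d → Prop) : Prop :=
  ∀ i, ¬ ∃ p, PathFrom E i i p

/-- `j` is an ancestor of `i`: there is a path from `j` to `i`. -/
def anc (E : Fin d → Fin d → Prop) (j i : Fin d) : Prop :=
  ∃ p, PathFrom E j i p

/-- The weight of a path `p` starting at `j`: `c j j` times the product of the
edge weights along `p`. -/
noncomputable def pathWeight (c : Fin d → Fin d → ℝ≥0) (j : Fin d) (p : List (Fin d)) : ℝ≥0 :=
  c j j * ((p.zip p.tail).map fun q => c q.1 q.2).prod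

/-- `b` is the max-linear coefficient matrix of the recursive ML model on `(E, c)`:
for `j ∈ an(i)`, `b j i` is the (attained) maximum of the path weights over all paths
from `j` to `i`; `b i i = c i i`; and `b j i = 0` for `j ∉ An(i)`. -/
def IsMLMatrix (E : Fin d → Fin d → Prop) (c b : Fin d → Fin d → ℝ≥0) : Prop :=
  (∀ i, b i i = c i i) ∧
  (∀ j i, j ≠ i → ¬ anc E j i → b j i = 0) ∧
  (∀ j i p, PathFrom E j i p → pathWeight c j p ≤ b j i) ∧
  (∀ j i, anc E j i → ∃ p, PathFrom E j i p ∧ pathWeight c j p = b j i)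

/-- `x` is the vector of recursive max-linear values on `(E, c)` for noise `z`:
`x i = max (max_{k ∈ pa(i)} c k i * x k) (c i i * z i)`, empty max being `0`. -/
def IsRecML (E : Fin d → Fin d → Prop) (c : Fin d → Fin d → ℝ≥0) (z x : Fin d → ℝ≥0) : Prop :=
  ∀ i, x i = (Finset.univ.sup fun k => if E k i then c k i * x k else 0) ⊔ c i i * z i

/-- Max-times matrix product `F ⊙ G`. -/
noncomputable def mprod (F G : Fin d → Fin d → ℝ≥0) : Fin d → Fin d → ℝ≥0 :=
  fun i j => Finset.univ.sup fun k => F i k * G k j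

/-- Max-times matrix power, `mpow A 0` being the identity matrix. -/
noncomputable def mpow (A : Fin d → Fin d → ℝ≥0) : ℕ → Fin d → Fin d → ℝ≥0
  | 0 => fun i j => if i = j then 1 else 0
  | n + 1 => mprod (mpow A n) A

/-- `p` is a max-weighted path from `j` to `i`. -/
def MaxWeighted (E : Fin d → Fin d → Prop) (c b : Fin d → Fin d → ℝ≥0)
    (j i : Fin d) (p : List (Fin d)) : Prop :=
  PathFrom E j i p ∧ pathWeight c j p = b j i

/-- The lowest max-weighted ancestors of `i` in `U`: nodes `j ∈ An(i) ∩ U` such that no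
max-weighted path from `j` to `i` passes through a node of `U \ {j}`. -/
def AnLow (E : Fin d → Fin d → Prop) (c b : Fin d → Fin d → ℝ≥0)
    (U : Set (Fin d)) (i : Fin d) : Set (Fin d) :=
  {j | (anc E j i ∨ j = i) ∧ j ∈ U ∧
    ∀ p, MaxWeighted E c b j i p → ¬ ∃ u ∈ U \ {j}, u ∈ p}

/-- The highest max-weighted descendants of `i` in `U`: nodes `l ∈ De(i) ∩ U` such that no
max-weighted path from `i` to `l` passes through a node of `U \ {l}`. -/
def DeHigh (E : Fin d → Fin d → Prop) (c b : Fin d → Fin d → ℝ≥0)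
    (U : Set (Fin d)) (i : Fin d) : Set (Fin d) :=
  {l | (anc E i l ∨ l = i) ∧ l ∈ U ∧
    ∀ p, MaxWeighted E c b i l p → ¬ ∃ u ∈ U \ {l}, u ∈ p}


/-! ### Auxiliary machinery -/

/-- Product of edge weights along a list. -/
noncomputable def edgeProd (c : Fin d → Fin d → ℝ≥0) (p : List (Fin d)) : ℝ≥0 :=
  ((p.zip p.tail).map fun q => c q.1 q.2).prod

lemma pathWeight_def (c : Fin d → Fin d → ℝ≥0) (j : Fin d) (p : List (Fin d)) :
    pathWeight c j p = c j j * edgeProd c p := rfl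

@[simp] lemma edgeProd_nil (c : Fin d → Fin d → ℝ≥0) : edgeProd c [] = 1 := rfl

@[simp] lemma edgeProd_singleton (c : Fin d → Fin d → ℝ≥0) (a : Fin d) :
    edgeProd c [a] = 1 := rfl

lemma edgeProd_cons (c : Fin d → Fin d → ℝ≥0) (a b : Fin d) (l : List (Fin d)) :
    edgeProd c (a :: b :: l) = c a b * edgeProd c (b :: l) := by
  simp [edgeProd]

lemma edgeProd_append (c : Fin d → Fin d → ℝ≥0) :
    ∀ (p : List (Fin d)) {k : Fin d}, p.getLast? = some k →
    ∀ q, edgeProd c (p ++ q) = edgeProd c p * edgeProd c (k :: q)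
  | [], k, h, q => by simp at h
  | [a], k, h, q => by
      simp only [List.getLast?_singleton, Option.some_inj] at h
      subst h
      simp
  | a :: b :: p, k, h, q => by
      have h' : (b :: p).getLast? = some k := by
        rw [← h]; exact (List.getLast?_cons_cons ..).symm
      have ih := edgeProd_append c (b :: p) h' q
      simp only [List.cons_append] at ih ⊢
      rw [edgeProd_cons, edgeProd_cons, ih, mul_assoc]

lemma pathFrom_edge {E : Fin d → Fin d → Prop} {j i : Fin d} (h : E j i) :
    PathFrom E j i [j, i] :=
  ⟨by simp, rfl, rfl, by exact List.isChain_pair.mpr h⟩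

lemma PathFrom.exists_cons {E : Fin d → Fin d → Prop} {j i : Fin d} {p : List (Fin d)}
    (h : PathFrom E j i p) :
    ∃ t, p = j :: t ∧ t ≠ [] ∧ t.getLast? = some i := by
  obtain ⟨hl, hh, hlast, hc⟩ := h
  match p, hl with
  | a :: b :: t, _ =>
    simp only [List.head?_cons, Option.some_inj] at hh
    subst hh
    exact ⟨b :: t, rfl, by simp, by rw [← hlast]; exact (List.getLast?_cons_cons ..).symm⟩

lemma concat_path {E : Fin d → Fin d → Prop} {j k i : Fin d} {p q : List (Fin d)}
    (h1 : PathFrom E j k p) (h2 : PathFrom E k i q) :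
    PathFrom E j i (p ++ q.tail) := by
  obtain ⟨t, rfl, htne, htlast⟩ := h2.exists_cons
  obtain ⟨s, rfl, hsne, hslast⟩ := h1.exists_cons
  refine ⟨?_, ?_, ?_, ?_⟩
  · have := List.length_pos_iff.mpr hsne
    simp only [List.cons_append, List.length_append, List.length_cons]
    omega
  · rfl
  · simp only [List.tail_cons]
    rw [List.getLast?_append_of_ne_nil _ htne]
    exact htlast
  · simp only [List.tail_cons]
    rw [List.Chain', List.isChain_append]
    refine ⟨h1.2.2.2, (List.isChain_cons.mp h2.2.2.2).2, ?_⟩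
    intro x hx y hy
    rw [h1.2.2.1] at hx
    simp only [Option.mem_def, Option.some_inj] at hx
    subst hx
    exact (List.isChain_cons.mp h2.2.2.2).1 y hy

lemma anc_trans {E : Fin d → Fin d → Prop} {j k i : Fin d} (h1 : anc E j k)
    (h2 : anc E k i) : anc E j i := by
  obtain ⟨p, hp⟩ := h1
  obtain ⟨q, hq⟩ := h2
  exact ⟨_, concat_path hp hq⟩

lemma concat_weight {E : Fin d → Fin d → Prop} (c : Fin d → Fin d → ℝ≥0) {j k i : Fin d}
    {p q : List (Fin d)} (h1 : PathFrom E j k p) (h2 : PathFrom E k i q) :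
    pathWeight c j (p ++ q.tail) * c k k = pathWeight c j p * pathWeight c k q := by
  obtain ⟨t, rfl, htne, _⟩ := h2.exists_cons
  simp only [List.tail_cons]
  rw [pathWeight_def, pathWeight_def, pathWeight_def,
    edgeProd_append c p h1.2.2.1 t]
  ring

lemma snoc_weight {E : Fin d → Fin d → Prop} (c : Fin d → Fin d → ℝ≥0) {j k i : Fin d}
    {p : List (Fin d)} (h1 : PathFrom E j k p) (h2 : E k i) :
    PathFrom E j i (p ++ [i]) ∧ pathWeight c j (p ++ [i]) = pathWeight c j p * c k i := by
  have h2' : PathFrom E k i [k, i] := pathFrom_edge h2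
  constructor
  · have := concat_path h1 h2'
    simpa using this
  · rw [pathWeight_def, pathWeight_def, edgeProd_append c p h1.2.2.1 [i],
      edgeProd_cons c k i []]
    simp [edgeProd]
    ring

lemma split_aux {E : Fin d → Fin d → Prop} {u : Fin d} :
    ∀ (p : List (Fin d)) (j : Fin d), List.Chain' E p → p.head? = some j → u ∈ p → u ≠ j →
    ∃ p1 p2, p1.head? = some j ∧ p1.getLast? = some u ∧ 2 ≤ p1.length ∧ List.Chain' E p1 ∧
      p2.head? = some u ∧ p2.getLast? = p.getLast? ∧ List.Chain' E p2 ∧ p = p1 ++ p2.tail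
  | [], j, _, hh, hu, _ => by simp at hu
  | [a], j, _, hh, hu, hne => by
      simp only [List.head?_cons, Option.some_inj] at hh
      simp only [List.mem_singleton] at hu
      exact absurd (hu.trans hh) hne
  | a :: b :: t, j, hc, hh, hu, hne => by
      simp only [List.head?_cons, Option.some_inj] at hh
      subst hh
      rcases List.isChain_cons_cons.mp hc with ⟨hab, hc'⟩
      have hu' : u ∈ b :: t := by
        rcases List.mem_cons.mp hu with h | h
        · exact absurd h hne
        · exact h
      by_cases hub : u = b
      · subst hub
        refine ⟨[a, u], u :: t, rfl, rfl, by simp, by exact List.isChain_pair.mpr hab, rfl, ?_, hc', by simp⟩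
        exact (List.getLast?_cons_cons ..).symm
      · obtain ⟨q1, q2, hq1h, hq1l, hq1len, hq1c, hq2h, hq2l, hq2c, heq⟩ :=
          split_aux (b :: t) b hc' rfl hu' hub
        obtain ⟨q1', rfl⟩ : ∃ q1', q1 = b :: q1' := by
          cases q1 with
          | nil => simp at hq1h
          | cons x xs =>
              simp only [List.head?_cons, Option.some_inj] at hq1h
              subst hq1h
              exact ⟨xs, rfl⟩
        refine ⟨a :: b :: q1', q2, rfl, ?_, by simp, ?_, hq2h, ?_, hq2c, ?_⟩
        · rw [List.getLast?_cons_cons]; exact hq1l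
        · exact List.isChain_cons_cons.mpr ⟨hab, hq1c⟩
        · rw [List.getLast?_cons_cons]; exact hq2l
        · rw [List.cons_append]; rw [← heq]

lemma PathFrom.split {E : Fin d → Fin d → Prop} (c : Fin d → Fin d → ℝ≥0)
    {j i u : Fin d} {p : List (Fin d)} (h : PathFrom E j i p)
    (hu : u ∈ p) (huj : u ≠ j) (hui : u ≠ i) :
    ∃ p1 p2, PathFrom E j u p1 ∧ PathFrom E u i p2 ∧
      pathWeight c j p * c u u = pathWeight c j p1 * pathWeight c u p2 := by
  obtain ⟨p1, p2, h1h, h1l, h1len, h1c, h2h, h2l, h2c, heq⟩ :=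
    split_aux p j h.2.2.2 h.2.1 hu huj
  rw [h.2.2.1] at h2l
  have hp2 : PathFrom E u i p2 := by
    refine ⟨?_, h2h, h2l, h2c⟩
    match p2, h2h, h2l with
    | [x], hh, hl =>
        simp only [List.head?_cons, Option.some_inj] at hh
        simp only [List.getLast?_singleton, Option.some_inj] at hl
        exact absurd (hl ▸ hh ▸ rfl : u = i) hui
    | x :: y :: t, _, _ => simp
  have hp1 : PathFrom E j u p1 := ⟨h1len, h1h, h1l, h1c⟩
  refine ⟨p1, p2, hp1, hp2, ?_⟩
  subst heq
  exact concat_weight c hp1 hp2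

lemma PathFrom.last_edge {E : Fin d → Fin d → Prop} (c : Fin d → Fin d → ℝ≥0)
    {j i : Fin d} {p : List (Fin d)} (h : PathFrom E j i p) :
    ∃ k q, E k i ∧ ((q = [j] ∧ k = j) ∨ PathFrom E j k q) ∧
      pathWeight c j p = pathWeight c j q * c k i := by
  obtain ⟨hlen, hh, hl, hc⟩ := h
  have hne : p ≠ [] := by intro h'; subst h'; simp at hlen
  have hq0ne : p.dropLast ≠ [] := by
    intro h'
    have := congrArg List.length h'
    simp [List.length_dropLast] at this
    omega
  set q0 := p.dropLast with hq0
  have hgl : p.getLast hne = i := by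
    have := List.getLast?_eq_getLast hne
    rw [hl] at this
    exact (Option.some_inj.mp this).symm
  have hp : q0 ++ [i] = p := by rw [← hgl]; exact List.dropLast_append_getLast hne
  set k := q0.getLast hq0ne with hk
  have hq0l : q0.getLast? = some k := List.getLast?_eq_getLast hq0ne
  have hchain : List.Chain' E q0 ∧ E k i := by
    rw [← hp] at hc
    rcases List.isChain_append.mp hc with ⟨h1, _, h3⟩
    exact ⟨h1, h3 k hq0l i rfl⟩
  have hq0h : q0.head? = some j := by
    rw [← hp] at hh
    rwa [List.head?_append_of_ne_nil _ hq0ne] at hh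
  have hw : pathWeight c j p = pathWeight c j q0 * c k i := by
    rw [← hp, pathWeight_def, pathWeight_def, edgeProd_append c q0 hq0l [i],
      edgeProd_cons c k i]
    simp [edgeProd]
    ring
  clear hq0 hk hgl
  clear_value k q0
  by_cases hq1 : q0.length = 1
  · obtain ⟨a, rfl⟩ := List.length_eq_one_iff.mp hq1
    simp only [List.head?_cons, Option.some_inj] at hq0h
    subst hq0h
    simp only [List.getLast?_singleton, Option.some_inj] at hq0l
    subst hq0l
    exact ⟨a, [a], hchain.2, Or.inl ⟨rfl, rfl⟩, hw⟩
  · have hlen2 : 2 ≤ q0.length := by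
      have := List.length_pos_iff.mpr hq0ne
      omega
    exact ⟨k, q0, hchain.2, Or.inr ⟨hlen2, hq0h, hq0l, hchain.1⟩, hw⟩

/-! ### Inequalities for the ML coefficient matrix -/

lemma le_b_mul_edge {E : Fin d → Fin d → Prop} {c b : Fin d → Fin d → ℝ≥0}
    (hb : IsMLMatrix E c b) {k i : Fin d} (hki : E k i) (j : Fin d) :
    b j k * c k i ≤ b j i := by
  by_cases hjk0 : b j k = 0
  · rw [hjk0]; simp
  by_cases hjk : j = k
  · subst hjk
    rw [hb.1]
    have hpw : c j j * c j i = pathWeight c j [j, i] := by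
      rw [pathWeight_def, edgeProd_cons]
      simp
    rw [hpw]
    exact hb.2.2.1 j i [j, i] (pathFrom_edge hki)
  · have hanc : anc E j k := by
      by_contra hn
      exact hjk0 (hb.2.1 j k hjk hn)
    obtain ⟨p, hp, hpw⟩ := hb.2.2.2 j k hanc
    obtain ⟨hps, hpw2⟩ := snoc_weight c hp hki
    calc b j k * c k i = pathWeight c j (p ++ [i]) := by rw [← hpw, hpw2]
      _ ≤ b j i := hb.2.2.1 j i _ hps

lemma le_b_mul {E : Fin d → Fin d → Prop} {c b : Fin d → Fin d → ℝ≥0}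
    (hb : IsMLMatrix E c b) {k i : Fin d} (h : anc E k i ∨ k = i) (j : Fin d) :
    b j k * b k i ≤ b k k * b j i := by
  rcases h with h | rfl
  · by_cases hjk0 : b j k = 0
    · rw [hjk0]; simp
    by_cases hjk : j = k
    · subst hjk
      exact le_rfl
    · have hanc : anc E j k := by
        by_contra hn
        exact hjk0 (hb.2.1 j k hjk hn)
      obtain ⟨p, hp, hpw⟩ := hb.2.2.2 j k hanc
      obtain ⟨q, hq, hqw⟩ := hb.2.2.2 k i h
      have hcat := concat_path hp hq
      have hw := concat_weight c hp hq
      calc b j k * b k i = pathWeight c j (p ++ q.tail) * c k k := by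
            rw [← hpw, ← hqw, hw]
        _ ≤ b j i * c k k := mul_le_mul_left (hb.2.2.1 j i _ hcat) _
        _ = b k k * b j i := by rw [hb.1]; ring
  · exact (mul_comm _ _).le

/-! ### The max-linear representation of the recursive values -/

lemma x_repr {E : Fin d → Fin d → Prop} {c b : Fin d → Fin d → ℝ≥0} {z x : Fin d → ℝ≥0}
    (hE : Acyclic E) (hb : IsMLMatrix E c b) (hx : IsRecML E c z x) (i : Fin d) :
    x i = Finset.univ.sup fun j => b j i * z j := by
  have hwf : WellFounded (anc E) :=
    @Finite.wellFounded_of_trans_of_irrefl _ _ _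
      ⟨fun _ _ _ h1 h2 => anc_trans h1 h2⟩ ⟨fun a h => hE a h⟩
  refine hwf.induction (C := fun i => x i = Finset.univ.sup fun j => b j i * z j) i ?_
  clear i
  intro i IH
  apply le_antisymm
  · rw [hx i]
    apply sup_le
    · apply Finset.sup_le
      intro k _
      by_cases hEk : E k i
      · rw [if_pos hEk, IH k ⟨_, pathFrom_edge hEk⟩, NNReal.mul_finset_sup]
        apply Finset.sup_le
        intro j _
        refine le_trans ?_ (Finset.le_sup (Finset.mem_univ j))
        calc c k i * (b j k * z j) = (b j k * c k i) * z j := by ring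
          _ ≤ b j i * z j := mul_le_mul_left (le_b_mul_edge hb hEk j) _
      · rw [if_neg hEk]; exact zero_le
    · refine le_trans (le_of_eq ?_)
        (Finset.le_sup (f := fun j => b j i * z j) (Finset.mem_univ i))
      show c i i * z i = b i i * z i
      rw [hb.1]
  · apply Finset.sup_le
    intro j _
    by_cases hbji : b j i = 0
    · rw [hbji, zero_mul]; exact zero_le
    by_cases hji : j = i
    · subst hji
      rw [hb.1, hx j]
      exact le_sup_right
    have hanc : anc E j i := by
      by_contra hn
      exact hbji (hb.2.1 j i hji hn)
    obtain ⟨p, hp, hpw⟩ := hb.2.2.2 j i hanc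
    obtain ⟨k, q, hEki, hq, hw⟩ := hp.last_edge c
    have hqle : pathWeight c j q ≤ b j k := by
      rcases hq with ⟨hq0, hkj⟩ | hq
      · rw [hq0, hkj, hb.1, pathWeight_def]
        simp
      · exact hb.2.2.1 j k q hq
    have hkx : b j k * z j ≤ x k := by
      rcases hq with ⟨hq0, hkj⟩ | hq
      · rw [hkj, hb.1, hx j]
        exact le_sup_right
      · rw [IH k ⟨_, pathFrom_edge hEki⟩]
        exact Finset.le_sup (f := fun j => b j k * z j) (Finset.mem_univ j)
    calc b j i * z j = pathWeight c j q * c k i * z j := by rw [← hpw, hw]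
      _ ≤ b j k * c k i * z j := mul_le_mul_left (mul_le_mul_left hqle _) _
      _ = c k i * (b j k * z j) := by ring
      _ ≤ c k i * x k := mul_le_mul_right hkx _
      _ ≤ x i := by
          rw [hx i]
          refine le_trans ?_ le_sup_left
          exact le_trans (le_of_eq (if_pos hEki).symm)
            (Finset.le_sup (f := fun k => if E k i then c k i * x k else 0)
              (Finset.mem_univ k))

lemma x_le_of_anc {E : Fin d → Fin d → Prop} {c b : Fin d → Fin d → ℝ≥0} {z x : Fin d → ℝ≥0}
    (hE : Acyclic E) (hcd : ∀ i, 0 < c i i)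
    (hb : IsMLMatrix E c b) (hx : IsRecML E c z x) {k i : Fin d}
    (h : anc E k i ∨ k = i) : (b k i / b k k) * x k ≤ x i := by
  have hkk : b k k ≠ 0 := by rw [hb.1]; exact (hcd k).ne'
  rw [x_repr hE hb hx k, x_repr hE hb hx i, NNReal.mul_finset_sup]
  apply Finset.sup_le
  intro j _
  refine le_trans ?_ (Finset.le_sup (Finset.mem_univ j))
  rw [div_mul_eq_mul_div, div_le_iff₀ (pos_iff_ne_zero.mpr hkk)]
  calc b k i * (b j k * z j) = (b j k * b k i) * z j := by ring
    _ ≤ (b k k * b j i) * z j := mul_le_mul_left (le_b_mul hb h j) _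
    _ = b j i * z j * b k k := by ring


/-- Let `U ⊆ V` and `i ∈ V`. For every `z` with recursive max-linear values
`x` on `𝒟`, one has
`x i = max (max_{k ∈ An_low^U(i)} (b k i / b k k) * x k) (max_{j ∈ An_nmw^U(i)} b j i * z j)`
where `An_nmw^U(i) = (an_nmw^U(i) ∪ {i}) ∩ Uᶜ` and `an_nmw^U(i)` is the set of `j ∈ an(i)`
such that no max-weighted path from `j` to `i` passes through a node of `U`
(empty maxima being `0`). -/
theorem stmt18 {d : ℕ} (hd : 1 ≤ d) (E : Fin d → Fin d → Prop) (hE : Acyclic E)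
    (c : Fin d → Fin d → ℝ≥0) (hcd : ∀ i, 0 < c i i) (hce : ∀ k i, E k i → 0 < c k i)
    (b : Fin d → Fin d → ℝ≥0) (hb : IsMLMatrix E c b)
    (U : Set (Fin d)) (i : Fin d) (z x : Fin d → ℝ≥0) (hx : IsRecML E c z x) :
    x i =
      (Finset.univ.sup fun k =>
        if k ∈ AnLow E c b U i then (b k i / b k k) * x k else 0) ⊔
      (Finset.univ.sup fun j =>
        if (j = i ∨ (anc E j i ∧ ∀ p, MaxWeighted E c b j i p → ¬ ∃ u ∈ U, u ∈ p)) ∧ j ∉ U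
        then b j i * z j else 0) := by
  have hbkk : ∀ k : Fin d, b k k ≠ 0 := fun k => by rw [hb.1]; exact (hcd k).ne'
  have hlow_le : ∀ k : Fin d, k ∈ AnLow E c b U i →
      (b k i / b k k) * x k ≤
        (Finset.univ.sup fun k =>
          if k ∈ AnLow E c b U i then (b k i / b k k) * x k else 0) := by
    intro k hk
    exact le_trans (le_of_eq (if_pos hk).symm)
      (Finset.le_sup
        (f := fun k => if k ∈ AnLow E c b U i then (b k i / b k k) * x k else 0)
        (Finset.mem_univ k))
  have hiU : i ∈ U → i ∈ AnLow E c b U i := by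
    intro h
    exact ⟨Or.inr rfl, h, fun p hp => absurd ⟨p, hp.1⟩ (hE i)⟩
  have hwf : WellFounded (fun a b : Fin d => anc E b a) :=
    @Finite.wellFounded_of_trans_of_irrefl _ _ _
      ⟨fun _ _ _ h1 h2 => anc_trans h2 h1⟩ ⟨fun a h => hE a h⟩
  have descend : ∀ k : Fin d, (anc E k i ∨ k = i) → k ∈ U →
      (b k i / b k k) * x k ≤
        (Finset.univ.sup fun k =>
          if k ∈ AnLow E c b U i then (b k i / b k k) * x k else 0) := by
    intro k
    refine hwf.induction
      (C := fun k => (anc E k i ∨ k = i) → k ∈ U →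
        (b k i / b k k) * x k ≤
          (Finset.univ.sup fun k =>
            if k ∈ AnLow E c b U i then (b k i / b k k) * x k else 0)) k ?_
    clear k
    intro k IH hkAn hkU
    by_cases hlow : k ∈ AnLow E c b U i
    · exact hlow_le k hlow
    have h3 : ¬ ∀ p, MaxWeighted E c b k i p → ¬ ∃ u ∈ U \ {k}, u ∈ p := by
      intro hforall
      exact hlow ⟨hkAn, hkU, hforall⟩
    push_neg at h3
    obtain ⟨p, hmw, u, huMem, hup⟩ := h3
    have huU : u ∈ U := huMem.1
    have huk : u ≠ k := by
      intro h
      exact huMem.2 (by simp [h])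
    by_cases hui : u = i
    · calc (b k i / b k k) * x k ≤ x i := x_le_of_anc hE hcd hb hx hkAn
        _ = (b i i / b i i) * x i := by rw [div_self (hbkk i), one_mul]
        _ ≤ _ := hlow_le i (hiU (hui ▸ huU))
    · obtain ⟨p1, p2, hp1, hp2, hsplit⟩ := hmw.1.split c hup huk hui
      have key : b k i * c u u ≤ b k u * b u i := by
        rw [← hmw.2, hsplit]
        exact mul_le_mul' (hb.2.2.1 _ _ _ hp1) (hb.2.2.1 _ _ _ hp2)
      have hbuu : (0 : ℝ≥0) < b u u := by rw [hb.1]; exact hcd u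
      have hbk : (0 : ℝ≥0) < b k k := by rw [hb.1]; exact hcd k
      have step1 : b k i / b k k ≤ (b u i * b k u) / (b u u * b k k) := by
        rw [div_le_div_iff₀ hbk (mul_pos hbuu hbk), hb.1 u]
        calc b k i * (c u u * b k k) = (b k i * c u u) * b k k := by ring
          _ ≤ (b k u * b u i) * b k k := mul_le_mul_left key _
          _ = b u i * b k u * b k k := by ring
      calc (b k i / b k k) * x k ≤ ((b u i * b k u) / (b u u * b k k)) * x k :=
            mul_le_mul_left step1 _
        _ = (b u i / b u u) * ((b k u / b k k) * x k) := by
            rw [← div_mul_div_comm, mul_assoc]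
        _ ≤ (b u i / b u u) * x u :=
            mul_le_mul_right (x_le_of_anc hE hcd hb hx (Or.inl ⟨p1, hp1⟩)) _
        _ ≤ _ := IH u ⟨p1, hp1⟩ (Or.inl ⟨p2, hp2⟩) huU
  apply le_antisymm
  · rw [x_repr hE hb hx i]
    apply Finset.sup_le
    intro j _
    by_cases hz : b j i * z j = 0
    · rw [hz]; exact zero_le
    have hbji : b j i ≠ 0 := fun h => hz (by rw [h, zero_mul])
    have hAn : anc E j i ∨ j = i := by
      by_cases hji : j = i
      · exact Or.inr hji
      · refine Or.inl ?_
        by_contra hn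
        exact hbji (hb.2.1 j i hji hn)
    by_cases hjU : j ∈ U
    · refine le_trans ?_ le_sup_left
      have hxj : b j j * z j ≤ x j := by
        rw [hb.1, hx j]
        exact le_sup_right
      calc b j i * z j = (b j i / b j j) * (b j j * z j) := by
            rw [← mul_assoc, div_mul_cancel₀ _ (hbkk j)]
        _ ≤ (b j i / b j j) * x j := mul_le_mul_right hxj _
        _ ≤ _ := descend j hAn hjU
    by_cases hnm : (j = i ∨ (anc E j i ∧ ∀ p, MaxWeighted E c b j i p → ¬ ∃ u ∈ U, u ∈ p))
    · refine le_trans ?_ le_sup_right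
      exact le_trans (le_of_eq (if_pos ⟨hnm, hjU⟩).symm)
        (Finset.le_sup
          (f := fun j =>
            if (j = i ∨ (anc E j i ∧ ∀ p, MaxWeighted E c b j i p → ¬ ∃ u ∈ U, u ∈ p)) ∧ j ∉ U
            then b j i * z j else 0)
          (Finset.mem_univ j))
    · refine le_trans ?_ le_sup_left
      have hji : j ≠ i := fun h => hnm (Or.inl h)
      have hanc : anc E j i := hAn.resolve_right hji
      have h4 : ¬ ∀ p, MaxWeighted E c b j i p → ¬ ∃ u ∈ U, u ∈ p :=
        fun h => hnm (Or.inr ⟨hanc, h⟩)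
      push_neg at h4
      obtain ⟨p, hmw, u, huU, hup⟩ := h4
      have huj : u ≠ j := fun h => hjU (h ▸ huU)
      by_cases hui : u = i
      · calc b j i * z j ≤ x i := by
              rw [x_repr hE hb hx i]
              exact Finset.le_sup (f := fun j => b j i * z j) (Finset.mem_univ j)
          _ = (b i i / b i i) * x i := by rw [div_self (hbkk i), one_mul]
          _ ≤ _ := descend i (Or.inr rfl) (hui ▸ huU)
      · obtain ⟨p1, p2, hp1, hp2, hsplit⟩ := hmw.1.split c hup huj hui
        have key : b j i * c u u ≤ b j u * b u i := by
          rw [← hmw.2, hsplit]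
          exact mul_le_mul' (hb.2.2.1 _ _ _ hp1) (hb.2.2.1 _ _ _ hp2)
        have hxu : b j u * z j ≤ x u := by
          rw [x_repr hE hb hx u]
          exact Finset.le_sup (f := fun j => b j u * z j) (Finset.mem_univ j)
        have hcuu : c u u ≠ 0 := (hcd u).ne'
        have step : b j i ≤ (b u i / b u u) * b j u := by
          rw [div_mul_eq_mul_div, hb.1 u, le_div_iff₀ (pos_iff_ne_zero.mpr hcuu)]
          calc b j i * c u u ≤ b j u * b u i := key
            _ = b u i * b j u := mul_comm _ _
        calc b j i * z j ≤ ((b u i / b u u) * b j u) * z j := mul_le_mul_left step _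
          _ = (b u i / b u u) * (b j u * z j) := mul_assoc _ _ _
          _ ≤ (b u i / b u u) * x u := mul_le_mul_right hxu _
          _ ≤ _ := descend u (Or.inl ⟨p2, hp2⟩) huU
  · apply sup_le
    · apply Finset.sup_le
      intro k _
      by_cases hk : k ∈ AnLow E c b U i
      · rw [if_pos hk]
        exact x_le_of_anc hE hcd hb hx hk.1
      · rw [if_neg hk]; exact zero_le
    · apply Finset.sup_le
      intro j _
      by_cases hj : (j = i ∨ (anc E j i ∧ ∀ p, MaxWeighted E c b j i p → ¬ ∃ u ∈ U, u ∈ p)) ∧ j ∉ U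
      · rw [if_pos hj]
        rw [x_repr hE hb hx i]
        exact Finset.le_sup (f := fun j => b j i * z j) (Finset.mem_univ j)
      · rw [if_neg hj]; exact zero_le
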